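/- Let q be a prime, let k = q - 1, let n ≥ 1 be an integer with q ∣ n, and let α be an integer with α^n ≡ 1 (mod n) and α ≡ 1 (mod q). Then Σ_{i=k}^{n-1} i^(k̲) · α^(i-k) ≢ 0 (mod n). -/

import Mathlib

open Finset

-- hockey stick, range form
lemma mySum_range_choose (M r : ℕ) : ∑ i ∈ range M, i.choose r = M.choose (r+1) := by
  induction M with
  | zero => simp
  | succ M ih => rw [Finset.sum_range_succ, ih, Nat.choose_succ_succ' M r, Nat.add_comm]

-- shifted hockey stick
lemma mySum_range_choose_add (k N m : ℕ) :
    ∑ j ∈ range N, (k + j).choose (k + m) = (k + N).choose (k + m + 1) := by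
  have h1 : ∑ j ∈ range N, (k + j).choose (k + m) = ∑ i ∈ Finset.Ico k (k + N), i.choose (k + m) := by
    rw [Finset.sum_Ico_eq_sum_range]
    simp
  have h2 : ∑ i ∈ Finset.Ico 0 k, i.choose (k + m) = 0 := by
    apply Finset.sum_eq_zero
    intro i hi
    simp only [Finset.mem_Ico] at hi
    exact Nat.choose_eq_zero_of_lt (by omega)
  have h3 := Finset.sum_Ico_consecutive (fun i => i.choose (k + m)) (Nat.zero_le k)
      (Nat.le_add_right k N)
  rw [h1, ← mySum_range_choose (k + N) (k + m), Finset.range_eq_Ico, ← h3, h2, Nat.zero_add]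

lemma myInner (k m N : ℕ) :
    ∑ j ∈ range N, (k + j).choose k * j.choose m
      = (k + m).choose k * (k + N).choose (k + m + 1) := by
  have key : ∀ j, (k + j).choose k * j.choose m = (k + m).choose k * (k + j).choose (k + m) := by
    intro j
    rcases le_or_gt m j with h | h
    · have h2 := Nat.choose_mul (n := k + j) (show k ≤ k + m by omega)
      simp only [Nat.add_sub_cancel_left] at h2
      rw [← h2, Nat.mul_comm]
    · rw [Nat.choose_eq_zero_of_lt h, Nat.choose_eq_zero_of_lt (show k + j < k + m by omega)]
      simp
  rw [Finset.sum_congr rfl fun j _ => key j, ← Finset.mul_sum, mySum_range_choose_add]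
open Finset

lemma myIdentity (k n : ℕ) (hkn : k ≤ n) (α : ℤ) :
    ∑ i ∈ Finset.Ico k n, (i.descFactorial k : ℤ) * α ^ (i - k)
      = (k.factorial : ℤ) *
        ∑ m ∈ range (n - k), (((k+m).choose k * n.choose (k+m+1) : ℕ) : ℤ) * (α - 1) ^ m := by
  set N := n - k with hN
  set β := α - 1 with hβ
  have hα : α = β + 1 := by ring
  have step1 : ∑ i ∈ Finset.Ico k n, (i.descFactorial k : ℤ) * α ^ (i - k)
      = ∑ j ∈ range N, ((k + j).descFactorial k : ℤ) * α ^ j := by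
    rw [Finset.sum_Ico_eq_sum_range]
    simp [hN]
  have step2 : ∀ j, ((k + j).descFactorial k : ℤ) = (k.factorial : ℤ) * ((k+j).choose k : ℤ) := by
    intro j
    rw [Nat.descFactorial_eq_factorial_mul_choose]
    push_cast
    ring
  have step3 : ∀ j ∈ range N, α ^ j = ∑ m ∈ range N, ((j.choose m : ℤ)) * β ^ m := by
    intro j hj
    simp only [Finset.mem_range] at hj
    rw [hα, add_pow]
    have hsub : range (j+1) ⊆ range N := Finset.range_subset_range.2 (by omega)
    rw [Finset.sum_subset hsub]
    · apply Finset.sum_congr rfl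
      intro m _
      ring
    · intro m _ hm
      simp only [Finset.mem_range, not_lt] at hm
      rw [Nat.choose_eq_zero_of_lt (by omega)]
      simp
  calc ∑ i ∈ Finset.Ico k n, (i.descFactorial k : ℤ) * α ^ (i - k)
      = ∑ j ∈ range N, ((k + j).descFactorial k : ℤ) * α ^ j := step1
    _ = ∑ j ∈ range N, (k.factorial : ℤ) * (((k+j).choose k : ℤ) *
          ∑ m ∈ range N, ((j.choose m : ℤ)) * β ^ m) := by
        apply Finset.sum_congr rfl
        intro j hj
        rw [step2 j, step3 j hj, mul_assoc]
    _ = (k.factorial : ℤ) * ∑ j ∈ range N, ∑ m ∈ range N,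
          (((k+j).choose k * j.choose m : ℕ) : ℤ) * β ^ m := by
        simp only [Finset.mul_sum]
        apply Finset.sum_congr rfl
        intro j _
        apply Finset.sum_congr rfl
        intro m _
        push_cast
        ring
    _ = (k.factorial : ℤ) * ∑ m ∈ range N, ∑ j ∈ range N,
          (((k+j).choose k * j.choose m : ℕ) : ℤ) * β ^ m := by rw [Finset.sum_comm]
    _ = (k.factorial : ℤ) *
        ∑ m ∈ range N, (((k+m).choose k * n.choose (k+m+1) : ℕ) : ℤ) * β ^ m := by
        congr 1
        apply Finset.sum_congr rfl
        intro m _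
        rw [← Finset.sum_mul, ← Nat.cast_sum, myInner k m N,
          show k + N = n by omega]
open Finset

lemma myNotDvdChoose (q n : ℕ) (hq : q.Prime) (hn : 1 ≤ n) (hqn : q ∣ n) :
    ¬ q ^ (n.factorization q) ∣ n.choose q := by
  have hq2 : 2 ≤ q := hq.two_le
  have hqle : q ≤ n := Nat.le_of_dvd hn hqn
  have hkey : n * (n - 1).choose (q - 1) = n.choose q * q := by
    have h := Nat.add_one_mul_choose_eq (n - 1) (q - 1)
    simpa [Nat.succ_eq_add_one, Nat.sub_add_cancel hn, Nat.sub_add_cancel (by omega : 1 ≤ q)]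
      using h
  have hnd : ¬ q ∣ (n - 1).choose (q - 1) := by
    intro hdvd
    have h1 : q ∣ ((q - 1).factorial * (n - 1).choose (q - 1)) := hdvd.mul_left _
    rw [← Nat.descFactorial_eq_factorial_mul_choose, Nat.descFactorial_eq_prod_range] at h1
    obtain ⟨i, hi, hdi⟩ := hq.prime.exists_mem_finset_dvd h1
    simp only [Finset.mem_range] at hi
    have h2 : q ∣ n - (n - 1 - i) := Nat.dvd_sub hqn hdi
    have h3 : n - (n - 1 - i) = i + 1 := by omega
    rw [h3] at h2
    have := Nat.le_of_dvd (by omega) h2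
    omega
  intro hdvd
  have hcpos : 0 < (n - 1).choose (q - 1) := Nat.choose_pos (by omega)
  have h2 : q ^ (n.factorization q + 1) ∣ n * (n - 1).choose (q - 1) := by
    rw [hkey, pow_succ]
    exact mul_dvd_mul hdvd dvd_rfl
  have hne : n * (n - 1).choose (q - 1) ≠ 0 := by positivity
  have h4 := (Nat.Prime.pow_dvd_iff_le_factorization hq hne).1 h2
  rw [Nat.factorization_mul (by omega) hcpos.ne', Finsupp.add_apply,
    Nat.factorization_eq_zero_of_not_dvd hnd] at h4
  omega

lemma myDvd2 (q n m : ℕ) (hq : q.Prime) (hn : 1 ≤ n) (hqn : q ∣ n) (hm : 1 ≤ m) :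
    q ^ (n.factorization q) ∣ n.choose (q + m) * q ^ m := by
  have hq2 : 2 ≤ q := hq.two_le
  rcases lt_or_ge n (q + m) with hc | hle
  · rw [Nat.choose_eq_zero_of_lt hc]; simp
  have hcpos : 0 < n.choose (q + m) := Nat.choose_pos hle
  set s := (q + m).factorization q with hs
  have hsm : s ≤ m := by
    by_contra hcon
    push_neg at hcon
    have h1 : q ^ s ∣ q + m := Nat.ordProj_dvd _ _
    have h2 : q ^ s ≤ q + m := Nat.le_of_dvd (by omega) h1
    have h3 : q ^ (m + 1) ≤ q ^ s := Nat.pow_le_pow_right (by omega) (by omega)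
    have h5 : m + 1 ≤ q ^ m := by
      calc m + 1 ≤ 2 ^ m := Nat.lt_two_pow_self
        _ ≤ q ^ m := Nat.pow_le_pow_left (by omega) m
    have h6 : q * (m + 1) ≤ q ^ (m + 1) := by
      rw [pow_succ, mul_comm]
      exact Nat.mul_le_mul_right q h5
    nlinarith
  have hkey : n * (n - 1).choose (q + m - 1) = n.choose (q + m) * (q + m) := by
    have h := Nat.add_one_mul_choose_eq (n - 1) (q + m - 1)
    simpa [Nat.succ_eq_add_one, Nat.sub_add_cancel hn,
      Nat.sub_add_cancel (by omega : 1 ≤ q + m)] using h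
  have hcpos' : 0 < (n - 1).choose (q + m - 1) := Nat.choose_pos (by omega)
  -- factorization comparison
  have hfa : n.factorization q ≤ (n.choose (q + m)).factorization q + s := by
    have h7 : (n * (n - 1).choose (q + m - 1)).factorization q
        = (n.choose (q + m) * (q + m)).factorization q := by rw [hkey]
    rw [Nat.factorization_mul (by omega) hcpos'.ne', Finsupp.add_apply,
      Nat.factorization_mul hcpos.ne' (by omega), Finsupp.add_apply] at h7
    omega
  apply (Nat.Prime.pow_dvd_iff_le_factorization hq (by positivity)).2
  rw [Nat.factorization_mul hcpos.ne' (by positivity), Finsupp.add_apply,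
    hq.factorization_pow]
  simp only [Finsupp.single_apply, if_true, eq_self_iff_true]
  omega

/-- If `q` is prime, `k = q - 1`, `n ≥ 1` with `q ∣ n`, and `α ^ n ≡ 1 (mod n)`
with `α ≡ 1 (mod q)`, then `∑_{i=k}^{n-1} i^(k̲) · α^(i-k) ≢ 0 (mod n)`. -/
theorem sum_descFactorial_mul_pow_not_modEq_zero_of_prime
    (q k n : ℕ) (hq : Nat.Prime q) (hk : k = q - 1) (hn : 1 ≤ n) (hqn : q ∣ n)
    (α : ℤ) (hα : α ^ n ≡ 1 [ZMOD (n : ℤ)]) (hα1 : α ≡ 1 [ZMOD (q : ℤ)]) :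
    ¬ ((∑ i ∈ Finset.Ico k n, (i.descFactorial k : ℤ) * α ^ (i - k)) ≡ 0 [ZMOD (n : ℤ)]) := by
  intro h
  have hq2 : 2 ≤ q := hq.two_le
  have hq1 : k + 1 = q := by omega
  have hqle : q ≤ n := Nat.le_of_dvd hn hqn
  have hkn : k ≤ n := by omega
  set a := n.factorization q with ha
  have hqa : q ^ a ∣ n := Nat.ordProj_dvd n q
  set S := ∑ i ∈ Finset.Ico k n, (i.descFactorial k : ℤ) * α ^ (i - k) with hS
  have hdS : ((q : ℤ) ^ a) ∣ S := by
    have h1 : (n : ℤ) ∣ S := (Int.modEq_zero_iff_dvd).1 h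
    have h2 : ((q ^ a : ℕ) : ℤ) ∣ (n : ℤ) := Int.natCast_dvd_natCast.2 hqa
    push_cast at h2
    exact h2.trans h1
  rw [hS, myIdentity k n hkn α] at hdS
  set β := α - 1 with hβdef
  have hβ : (q : ℤ) ∣ β := by
    have h1 : (q : ℤ) ∣ 1 - α := Int.ModEq.dvd hα1
    have h2 : (q : ℤ) ∣ -(1 - α) := dvd_neg.2 h1
    simpa [hβdef] using h2
  set T := ∑ m ∈ range (n - k), (((k+m).choose k * n.choose (k+m+1) : ℕ) : ℤ) * β ^ m with hT
  -- q ∤ k!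
  have hndf : ¬ q ∣ k.factorial := by
    intro hd
    have := (Nat.Prime.dvd_factorial hq).1 hd
    omega
  have hcop : IsCoprime ((q : ℤ) ^ a) ((k.factorial : ℕ) : ℤ) := by
    have h1 : Nat.Coprime (q ^ a) k.factorial :=
      Nat.Coprime.pow_left a ((Nat.Prime.coprime_iff_not_dvd hq).2 hndf)
    have := Nat.isCoprime_iff_coprime.2 h1
    push_cast at this
    exact this
  have hdT : ((q : ℤ) ^ a) ∣ T := hcop.dvd_of_dvd_mul_left hdS
  obtain ⟨N', hN'⟩ : ∃ N', n - k = N' + 1 := ⟨n - k - 1, by omega⟩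
  rw [hT, hN', Finset.sum_range_succ'] at hdT
  have hterm : ∀ i ∈ range N',
      ((q : ℤ) ^ a) ∣ (((k+(i+1)).choose k * n.choose (k+(i+1)+1) : ℕ) : ℤ) * β ^ (i+1) := by
    intro i _
    have hidx : k + (i+1) + 1 = q + (i+1) := by omega
    have hd1 : (q : ℤ) ^ a ∣ ((n.choose (q + (i+1)) : ℕ) : ℤ) * (q : ℤ) ^ (i+1) := by
      have := myDvd2 q n (i+1) hq hn hqn (by omega)
      exact_mod_cast Int.natCast_dvd_natCast.2 this
    obtain ⟨γ, hγ⟩ := pow_dvd_pow_of_dvd hβ (i+1)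
    have heq : (((k+(i+1)).choose k * n.choose (k+(i+1)+1) : ℕ) : ℤ) * β ^ (i+1)
        = (((k+(i+1)).choose k : ℕ) : ℤ) * (((n.choose (q + (i+1)) : ℕ) : ℤ) * (q : ℤ) ^ (i+1)) * γ := by
      rw [hidx]
      push_cast
      rw [hγ]
      ring
    rw [heq]
    exact Dvd.dvd.mul_right (Dvd.dvd.mul_left hd1 _) γ
  have hsum : ((q : ℤ) ^ a) ∣ ∑ i ∈ range N',
      (((k+(i+1)).choose k * n.choose (k+(i+1)+1) : ℕ) : ℤ) * β ^ (i+1) :=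
    Finset.dvd_sum hterm
  have hd0 : ((q : ℤ) ^ a) ∣ (((k+0).choose k * n.choose (k+0+1) : ℕ) : ℤ) * β ^ 0 := by
    have h9 := dvd_sub hdT hsum
    rwa [add_sub_cancel_left] at h9
  have hd0' : ((q : ℤ) ^ a) ∣ ((n.choose q : ℕ) : ℤ) := by
    simpa [Nat.choose_self, hq1] using hd0
  have hfin : q ^ a ∣ n.choose q := by exact_mod_cast hd0'
  exact myNotDvdChoose q n hq hn hqn hfin
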